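/- Let G be a linearly ordered additive commutative group, ℤ ×ₗ G the lexicographic product, and u = (1, 0). For every x with 0 ≤ x ≤ u, writing x² = (x + x − u) ⊔ 0 and 2(x²) = (x² + x²) ⊓ u, one has 2(x²) ≤ x if and only if the first coordinate of x is 0 or x = u. That is, θ(Δ(G)) = Rad(Δ(G)) ∪ {1}: the invariant θ of the perfect MV-algebra Δ(G) consists exactly of its infinitesimals together with the top element. -/

import Mathlib

private lemma lex_fst_le {G : Type*} [AddCommGroup G] [LinearOrder G] [IsOrderedAddMonoid G]
    {p q : ℤ ×ₗ G} (h : p ≤ q) : (ofLex p).1 ≤ (ofLex q).1 := by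
  rcases (Prod.Lex.le_iff (x := p) (y := q)).1 h with h | h
  · exact h.le
  · exact h.1.le

/-- In the perfect MV-algebra `Δ(G) = Γ(ℤ ×ₗ G, (1,0))`, an element `x`
satisfies `2(x²) ≤ x` iff its first coordinate is `0` or `x = u`; that is,
`θ(Δ(G)) = Rad(Δ(G)) ∪ {1}`. -/
theorem stmt_10 {G : Type*} [AddCommGroup G] [LinearOrder G] [IsOrderedAddMonoid G]
    (u : ℤ ×ₗ G) (hu : u = toLex (1, 0)) (x : ℤ ×ₗ G) (hx0 : 0 ≤ x) (hxu : x ≤ u) :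
    ((((x + x - u) ⊔ 0) + ((x + x - u) ⊔ 0)) ⊓ u ≤ x) ↔
       ((ofLex x).1 = 0 ∨ x = u) := by
  have ha0 : (0 : ℤ) ≤ (ofLex x).1 := lex_fst_le hx0
  have ha1 : (ofLex x).1 ≤ 1 := by simpa [hu] using lex_fst_le hxu
  rcases le_or_gt (x + x) u with h | h
  · -- here `x + x ≤ u`, so `x² = 0` and the truncated square is `0`
    have h2a : (ofLex x).1 + (ofLex x).1 ≤ 1 := by simpa [hu] using lex_fst_le h
    have hs : (x + x - u) ⊔ 0 = 0 := sup_eq_right.2 (sub_nonpos.2 h)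
    have h0u : (0 : ℤ ×ₗ G) ≤ u := le_trans hx0 hxu
    rw [hs, add_zero, inf_eq_left.2 h0u]
    simp only [hx0, true_iff]
    left; omega
  · -- here `u < x + x`, forcing the first coordinate to be `1`
    have h2a : (1 : ℤ) ≤ (ofLex x).1 + (ofLex x).1 := by
      have := lex_fst_le h.le
      simpa [hu] using this
    have ha : (ofLex x).1 = 1 := by omega
    have hs : (x + x - u) ⊔ 0 = x + x - u := sup_eq_left.2 (sub_pos.2 h).le
    have hlt : u < (x + x - u) + (x + x - u) := by
      refine (Prod.Lex.lt_iff (x := u)).2 (Or.inl ?_)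
      show (ofLex u).1 < (ofLex x).1 + (ofLex x).1 - (ofLex u).1 +
        ((ofLex x).1 + (ofLex x).1 - (ofLex u).1)
      simp [hu]; omega
    rw [hs, inf_eq_right.2 hlt.le]
    constructor
    · intro hle
      exact Or.inr (le_antisymm hxu hle)
    · rintro (h0 | rfl)
      · omega
      · exact le_rfl
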